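/- Let A be a real n×n matrix all of whose complex eigenvalues have negative real part (i.e., every μ in the spectrum of the complexification of A satisfies Re(μ) < 0). Let u : ℝ → ℝ^n be a function with ‖u(t)‖ ≤ M for all t ≥ 0 and some M ≥ 0, and let x : ℝ → ℝ^n be differentiable with x'(t) = A·x(t) + u(t) for all t ≥ 0. Then x is bounded on [0, ∞): there exists K ≥ 0 such that ‖x(t)‖ ≤ K for all t ≥ 0. -/

import Mathlib

open NormedSpace Polynomial
open scoped Nat

set_option maxHeartbeats 1000000
set_option synthInstance.maxHeartbeats 1000000

namespace HurwitzAux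

variable {n : ℕ}

local notation "Ec" => EuclideanSpace ℂ (Fin n)
local notation "Er" => EuclideanSpace ℝ (Fin n)

lemma exists_eigenvector {T : Ec →L[ℂ] Ec} {μ : ℂ}
    (hμ : μ ∈ spectrum ℂ T) : ∃ v : Ec, v ≠ 0 ∧ T v = μ • v := by
  rw [spectrum.mem_iff, ContinuousLinearMap.isUnit_iff_bijective] at hμ
  set f : Ec →L[ℂ] Ec := algebraMap ℂ _ μ - T with hf
  have hinj : ¬ Function.Injective f := by
    intro h
    have h' : Function.Injective (f : Ec →ₗ[ℂ] Ec) := h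
    exact hμ ⟨h, (LinearMap.injective_iff_surjective).mp h'⟩
  rw [Function.not_injective_iff] at hinj
  obtain ⟨a, b, hab, hne⟩ := hinj
  refine ⟨a - b, sub_ne_zero.mpr hne, ?_⟩
  have h0 : f (a - b) = 0 := by rw [map_sub, hab, sub_self]
  have h1 : μ • (a - b) - T (a - b) = 0 := by
    have h2 : f (a-b) = μ • (a-b) - T (a-b) := by
      simp [hf, Algebra.algebraMap_eq_smul_one]
    rwa [h2] at h0
  exact (sub_eq_zero.mp h1).symm

lemma pow_apply_eigenvector {T : Ec →L[ℂ] Ec} {μ : ℂ} {v : Ec}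
    (hv : T v = μ • v) (k : ℕ) : (T ^ k) v = μ ^ k • v := by
  induction k with
  | zero => simp
  | succ k ih =>
    rw [pow_succ, pow_succ, ContinuousLinearMap.mul_apply, hv, map_smul, ih, smul_smul,
      mul_comm]

lemma exp_apply_eigenvector {T : Ec →L[ℂ] Ec} {μ : ℂ} {v : Ec}
    (hv : T v = μ • v) : exp T v = Complex.exp μ • v := by
  have hs : Summable (fun k : ℕ => (k !⁻¹ : ℂ) • T ^ k) := expSeries_summable' T
  have h1 : exp T v = ∑' k : ℕ, ((k !⁻¹ : ℂ) • T ^ k) v := by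
    rw [exp_eq_tsum ℂ]
    exact ((ContinuousLinearMap.apply ℂ Ec v).map_tsum hs)
  have h2 : ∀ k : ℕ, ((k !⁻¹ : ℂ) • T ^ k) v = ((k !⁻¹ : ℂ) * μ ^ k) • v := by
    intro k
    rw [ContinuousLinearMap.smul_apply, pow_apply_eigenvector hv, smul_smul]
  have hsc : Summable (fun k : ℕ => (k ! : ℂ)⁻¹ * μ ^ k) := by
    simpa [smul_eq_mul] using expSeries_summable' (𝕂 := ℂ) (𝔸 := ℂ) μ
  rw [h1, tsum_congr h2, hsc.tsum_smul_const]
  congr 1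
  rw [Complex.exp_eq_exp_ℂ, exp_eq_tsum ℂ]
  simp [smul_eq_mul]

lemma aeval_apply_eigenvector {T : Ec →L[ℂ] Ec} {μ : ℂ} {v : Ec}
    (hv : T v = μ • v) (p : ℂ[X]) : (Polynomial.aeval T p) v = p.eval μ • v := by
  induction p using Polynomial.induction_on' with
  | add p q hp hq =>
    rw [map_add, ContinuousLinearMap.add_apply, hp, hq, eval_add, add_smul]
  | monomial k a =>
    rw [aeval_monomial, eval_monomial, ContinuousLinearMap.mul_apply,
      pow_apply_eigenvector hv, Algebra.algebraMap_eq_smul_one, ContinuousLinearMap.smul_apply,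
      ContinuousLinearMap.one_apply, smul_smul]

lemma exists_poly_aeval_eq_exp (T : Ec →L[ℂ] Ec) :
    ∃ p : ℂ[X], Polynomial.aeval T p = exp T := by
  have h1 : exp T ∈ Algebra.adjoin ℂ {T} := by
    have hsum : HasSum (fun k : ℕ => (k !⁻¹ : ℂ) • T ^ k) (exp T) := by
      have := expSeries_hasSum_exp (𝕂 := ℂ) T
      simpa [expSeries_apply_eq] using this
    have hclosed := Submodule.closed_of_finiteDimensional
      (Subalgebra.toSubmodule (Algebra.adjoin ℂ {T}))
    have hmem : ∀ s : Finset ℕ, (∑ k ∈ s, (k !⁻¹ : ℂ) • T ^ k) ∈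
        Subalgebra.toSubmodule (Algebra.adjoin ℂ {T}) := by
      intro s
      refine Submodule.sum_mem _ fun k _ => Submodule.smul_mem _ _ ?_
      exact Subalgebra.pow_mem _ (Algebra.self_mem_adjoin_singleton ℂ T) k
    have := hclosed.mem_of_tendsto hsum (Filter.Eventually.of_forall hmem)
    exact this
  rw [Algebra.adjoin_singleton_eq_range_aeval] at h1
  exact h1

lemma spectrum_exp_subset (T : Ec →L[ℂ] Ec) (hne : (spectrum ℂ T).Nonempty) :
    spectrum ℂ (exp T) ⊆ (fun μ => Complex.exp μ) '' spectrum ℂ T := by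
  obtain ⟨p, hp⟩ := exists_poly_aeval_eq_exp T
  rw [← hp, spectrum.map_polynomial_aeval_of_nonempty T p hne]
  rintro z ⟨μ, hμ, rfl⟩
  obtain ⟨v, hv0, hv⟩ := exists_eigenvector hμ
  have h1 := aeval_apply_eigenvector hv p
  rw [hp, exp_apply_eigenvector hv] at h1
  exact ⟨μ, hμ, smul_left_injective ℂ hv0 h1⟩

lemma exp_smul_norm_decay (T : Ec →L[ℂ] Ec)
    (hT : ∀ μ ∈ spectrum ℂ T, μ.re < 0) :
    ∃ C > (0:ℝ), ∃ ε > (0:ℝ), ∀ t : ℝ, 0 ≤ t →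
      ‖exp ((t:ℂ) • T)‖ ≤ C * Real.exp (-(ε * t)) := by
  letI : NormedAlgebra ℚ (Ec →L[ℂ] Ec) := .restrictScalars ℚ ℂ _
  rcases subsingleton_or_nontrivial (Ec →L[ℂ] Ec) with hss | hnt
  · exact ⟨1, one_pos, 1, one_pos, fun t ht => by
      rw [Subsingleton.elim (exp ((t:ℂ) • T)) 0, norm_zero]; positivity⟩
  have hne : (spectrum ℂ T).Nonempty := spectrum.nonempty T
  obtain ⟨μ₀, hμ₀mem, hμ₀max⟩ := (spectrum.isCompact T).exists_isMaxOn hne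
    (Complex.continuous_re.continuousOn)
  have hμ₀ : μ₀.re < 0 := hT μ₀ hμ₀mem
  set ε : ℝ := -μ₀.re / 2 with hεdef
  have hε : 0 < ε := by rw [hεdef]; linarith
  set B := exp T with hBdef
  have hlt : ∀ z ∈ spectrum ℂ B, ‖z‖₊ < Real.toNNReal (Real.exp (-ε)) := by
    intro z hz
    obtain ⟨μ, hμ, rfl⟩ := spectrum_exp_subset T hne hz
    have h1 : ‖Complex.exp μ‖ = Real.exp μ.re := Complex.norm_exp μ
    have h2 : μ.re ≤ μ₀.re := hμ₀max hμ
    have h3 : ‖Complex.exp μ‖ < Real.exp (-ε) := by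
      rw [h1]
      apply Real.exp_lt_exp.mpr
      rw [hεdef]; linarith
    rw [← norm_toNNReal]
    exact (Real.toNNReal_lt_toNNReal_iff (Real.exp_pos _)).mpr h3
  have hrad : spectralRadius ℂ B < ENNReal.ofReal (Real.exp (-ε)) :=
    spectrum.spectralRadius_lt_of_forall_lt B hlt
  have hgel := spectrum.pow_norm_pow_one_div_tendsto_nhds_spectralRadius B
  have hev : ∀ᶠ k : ℕ in Filter.atTop,
      ENNReal.ofReal (‖B ^ k‖ ^ (1 / (k:ℝ))) < ENNReal.ofReal (Real.exp (-ε)) :=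
    hgel.eventually_lt_const hrad
  obtain ⟨N, hN⟩ := Filter.eventually_atTop.mp hev
  have hpow : ∀ k : ℕ, N ≤ k → 1 ≤ k → ‖B ^ k‖ ≤ Real.exp (-(ε * k)) := by
    intro k hk1 hk2
    have h1 := hN k hk1
    have h2 : ‖B ^ k‖ ^ (1 / (k:ℝ)) < Real.exp (-ε) :=
      (ENNReal.ofReal_lt_ofReal_iff (Real.exp_pos _)).mp h1
    have hkne : (k:ℝ) ≠ 0 := by positivity
    have h3 : ‖B ^ k‖ = (‖B ^ k‖ ^ (1 / (k:ℝ))) ^ (k:ℝ) := by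
      rw [← Real.rpow_mul (norm_nonneg _), one_div, inv_mul_cancel₀ hkne, Real.rpow_one]
    calc ‖B ^ k‖ = (‖B ^ k‖ ^ (1 / (k:ℝ))) ^ (k:ℝ) := h3
      _ ≤ (Real.exp (-ε)) ^ (k:ℝ) :=
          Real.rpow_le_rpow (Real.rpow_nonneg (norm_nonneg _) _) h2.le (by positivity)
      _ = Real.exp (-(ε * k)) := by
          rw [← Real.exp_mul]; ring_nf
  have hgcont : Continuous fun s : ℝ => ‖exp ((s:ℂ) • T)‖ :=
    ((exp_continuous).comp (Complex.continuous_ofReal.smul continuous_const)).norm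
  obtain ⟨s₀, hs₀mem, hs₀max⟩ := isCompact_Icc.exists_isMaxOn
    (Set.nonempty_Icc.mpr (by positivity : (0:ℝ) ≤ (N:ℝ) + 1)) hgcont.continuousOn
  set C₁ := ‖exp ((s₀:ℂ) • T)‖ with hC₁def
  refine ⟨(C₁ + 1) * Real.exp (ε * ((N:ℝ) + 2)), by positivity, ε, hε, ?_⟩
  intro t ht
  have hC₁0 : 0 ≤ C₁ := norm_nonneg _
  rcases le_or_gt t ((N:ℝ) + 1) with hcase | hcase
  · have h1 : ‖exp ((t:ℂ) • T)‖ ≤ C₁ := hs₀max ⟨ht, hcase⟩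
    have h2 : (1:ℝ) ≤ Real.exp (ε * ((N:ℝ)+2)) * Real.exp (-(ε*t)) := by
      rw [← Real.exp_add]
      apply Real.one_le_exp
      nlinarith
    nlinarith [Real.exp_pos (ε*((N:ℝ)+2)), Real.exp_pos (-(ε*t))]
  · set k := Nat.floor t with hkdef
    have hkN : N + 1 ≤ k := by
      apply Nat.le_floor
      push_cast
      linarith
    have hk1 : (k:ℝ) ≤ t := Nat.floor_le ht
    have hk2 : t < k + 1 := Nat.lt_floor_add_one t
    have hNk : ((N:ℝ)+1) ≤ (k:ℝ) := by exact_mod_cast hkN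
    have hsplit : exp ((t:ℂ) • T) = B ^ k * exp ((((t - k : ℝ)):ℂ) • T) := by
      have hc : Commute ((k:ℂ) • T) ((((t - k : ℝ)):ℂ) • T) :=
        ((Commute.refl T).smul_left _).smul_right _
      have hsum : ((k:ℕ):ℂ) + (((t - k : ℝ)):ℂ) = (t:ℂ) := by push_cast; ring
      have harg : (t:ℂ) • T = (k:ℂ) • T + (((t - k : ℝ)):ℂ) • T := by
        rw [← hsum]; exact add_smul _ _ T
      calc exp ((t:ℂ) • T) = exp ((k:ℂ) • T + (((t - k : ℝ)):ℂ) • T) := by rw [harg]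
        _ = exp ((k:ℂ) • T) * exp ((((t - k : ℝ)):ℂ) • T) := exp_add_of_commute hc
        _ = B ^ k * exp ((((t - k : ℝ)):ℂ) • T) := by
            rw [hBdef, ← exp_nsmul]
            congr 2
            exact Nat.cast_smul_eq_nsmul ℂ k T
    have hmid : ‖exp ((((t - k : ℝ)):ℂ) • T)‖ ≤ C₁ := by
      apply hs₀max
      constructor
      · linarith
      · linarith
    have hBk : ‖B ^ k‖ ≤ Real.exp (-(ε * k)) := hpow k (by omega) (by omega)
    have hstep : ‖exp ((t:ℂ) • T)‖ ≤ Real.exp (-(ε * k)) * C₁ := by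
      rw [hsplit]
      exact (norm_mul_le _ _).trans (mul_le_mul hBk hmid (norm_nonneg _) (Real.exp_pos _).le)
    have hA : Real.exp (-(ε * k)) ≤ Real.exp (ε * ((N:ℝ)+2)) * Real.exp (-(ε * t)) := by
      rw [← Real.exp_add]
      apply Real.exp_le_exp.mpr
      nlinarith
    calc ‖exp ((t:ℂ) • T)‖ ≤ Real.exp (-(ε * k)) * C₁ := hstep
      _ ≤ (Real.exp (ε * ((N:ℝ)+2)) * Real.exp (-(ε * t))) * (C₁ + 1) := by
          apply mul_le_mul hA (by linarith) hC₁0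
          positivity
      _ = (C₁ + 1) * Real.exp (ε * ((N:ℝ) + 2)) * Real.exp (-(ε * t)) := by ring

/-- Complexification of a real Euclidean vector, as a linear map. -/
noncomputable def cxl : EuclideanSpace ℝ (Fin n) →ₗ[ℝ] EuclideanSpace ℂ (Fin n) where
  toFun v := WithLp.toLp 2 (fun i => (v i : ℂ))
  map_add' a b := by
    ext i
    simp
  map_smul' r a := by
    ext i
    simp [Complex.real_smul]

noncomputable def cx : EuclideanSpace ℝ (Fin n) →L[ℝ] EuclideanSpace ℂ (Fin n) :=
  LinearMap.toContinuousLinearMap cxl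

lemma cx_apply (v : Er) (i : Fin n) : cx v i = (v i : ℂ) := rfl

lemma norm_cx (v : Er) : ‖cx (n := n) v‖ = ‖v‖ := by
  rw [EuclideanSpace.norm_eq, EuclideanSpace.norm_eq]
  congr 1
  apply Finset.sum_congr rfl
  intro i _
  rw [cx_apply, Complex.norm_real]

lemma cx_exp_comm (L : Er →L[ℝ] Er) (T : Ec →L[ℂ] Ec)
    (hcomm : ∀ w : Er, cx (L w) = T (cx w)) (v : Er) :
    cx ((exp L) v) = (exp T) (cx v) := by
  have hpow : ∀ (k : ℕ) (w : Er), cx ((L ^ k) w) = (T ^ k) (cx w) := by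
    intro k
    induction k with
    | zero => intro w; simp
    | succ k ih =>
      intro w
      rw [pow_succ, pow_succ, ContinuousLinearMap.mul_apply, ContinuousLinearMap.mul_apply,
        ih (L w), hcomm w]
  have hsmul : ∀ (r : ℝ) (w : Ec), (r : ℂ) • w = r • w := by
    intro r w
    rw [← smul_one_smul ℂ r w]
    congr 1
    rw [Complex.real_smul, mul_one]
  have hs1 : Summable (fun k : ℕ => (k !⁻¹ : ℝ) • L ^ k) := expSeries_summable' L
  have hs2 : Summable (fun k : ℕ => ((k !⁻¹ : ℝ) • L ^ k) v) :=
    hs1.map (ContinuousLinearMap.apply ℝ Er v).toLinearMap.toAddMonoidHom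
      (ContinuousLinearMap.apply ℝ Er v).continuous
  have h1 : (exp L) v = ∑' k : ℕ, ((k !⁻¹ : ℝ) • L ^ k) v := by
    rw [exp_eq_tsum ℝ]
    exact (ContinuousLinearMap.apply ℝ Er v).map_tsum hs1
  have h2 : cx ((exp L) v) = ∑' k : ℕ, cx (((k !⁻¹ : ℝ) • L ^ k) v) := by
    rw [h1]
    exact cx.map_tsum hs2
  have hs3 : Summable (fun k : ℕ => (k !⁻¹ : ℂ) • T ^ k) := expSeries_summable' T
  have h3 : (exp T) (cx v) = ∑' k : ℕ, ((k !⁻¹ : ℂ) • T ^ k) (cx v) := by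
    rw [exp_eq_tsum ℂ]
    exact (ContinuousLinearMap.apply ℂ Ec (cx v)).map_tsum hs3
  rw [h2, h3]
  apply tsum_congr
  intro k
  rw [ContinuousLinearMap.smul_apply, ContinuousLinearMap.smul_apply, map_smul, hpow]
  rw [← hsmul]
  congr 1
  push_cast
  ring

lemma spectrum_toEuclideanCLM (Ac : Matrix (Fin n) (Fin n) ℂ) :
    spectrum ℂ (Matrix.toEuclideanCLM (𝕜 := ℂ) Ac) = spectrum ℂ Ac := by
  ext z
  rw [spectrum.mem_iff, spectrum.mem_iff, not_iff_not]
  have halg : (Matrix.toEuclideanCLM (𝕜 := ℂ) (n := Fin n)) (algebraMap ℂ _ z - Ac) =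
      algebraMap ℂ _ z - Matrix.toEuclideanCLM (𝕜 := ℂ) Ac := by
    rw [map_sub]
    congr 1
    rw [Algebra.algebraMap_eq_smul_one, Algebra.algebraMap_eq_smul_one, map_smul, map_one]
  constructor
  · intro h
    have h2 := h.map (Matrix.toEuclideanCLM (𝕜 := ℂ) (n := Fin n)).symm.toRingEquiv.toRingHom
    have h3 : algebraMap ℂ _ z - Ac = (Matrix.toEuclideanCLM (𝕜 := ℂ) (n := Fin n)).symm
        (algebraMap ℂ _ z - Matrix.toEuclideanCLM (𝕜 := ℂ) Ac) := by
      rw [← halg, StarAlgEquiv.symm_apply_apply]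
    rw [h3]
    exact h2
  · intro h
    have h2 := h.map (Matrix.toEuclideanCLM (𝕜 := ℂ) (n := Fin n)).toRingEquiv.toRingHom
    rw [← halg]
    exact h2

lemma commute_smul_smul (L : Er →L[ℝ] Er) (a b : ℝ) : Commute (a • L) (b • L) := by
  show _ * _ = _ * _
  ext v
  simp only [ContinuousLinearMap.mul_apply, ContinuousLinearMap.smul_apply, map_smul,
    smul_smul]
  rw [mul_comm]

lemma bounded_of_decay (L : Er →L[ℝ] Er) (C ε : ℝ) (hC : 0 < C) (hε : 0 < ε)
    (hdecay : ∀ t : ℝ, 0 ≤ t → ∀ v : Er, ‖exp (t • L) v‖ ≤ C * Real.exp (-(ε * t)) * ‖v‖)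
    (u : ℝ → Er) (M : ℝ) (hM : 0 ≤ M) (hu : ∀ t ≥ (0:ℝ), ‖u t‖ ≤ M)
    (x : ℝ → Er) (hx : Differentiable ℝ x)
    (hdyn : ∀ t ≥ (0:ℝ), deriv x t = L (x t) + u t) :
    ∃ K ≥ (0:ℝ), ∀ t ≥ (0:ℝ), ‖x t‖ ≤ K := by
  letI : NormedAlgebra ℚ (Er →L[ℝ] Er) := .restrictScalars ℚ ℝ _
  refine ⟨C * ‖x 0‖ + C * M / ε, by positivity, ?_⟩
  intro t ht
  set g : ℝ → (Er →L[ℝ] Er) := fun s => exp (s • L) with hgdef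
  have hgd : ∀ s : ℝ, HasDerivAt g (g s * L) s := fun s => hasDerivAt_exp_smul_const L s
  have hgnegd : ∀ s : ℝ, HasDerivAt (fun τ => g (-τ)) ((-1 : ℝ) • (g (-s) * L)) s :=
    fun s => (hgd (-s)).scomp s (hasDerivAt_neg s)
  set h : ℝ → Er := fun s => g (-s) (deriv x s - L (x s)) with hhdef
  have hyd : ∀ s : ℝ, HasDerivAt (fun τ => g (-τ) (x τ)) (h s) s := by
    intro s
    have h1 := (hgnegd s).clm_apply (hx s).hasDerivAt
    refine h1.congr_deriv ?_
    rw [hhdef]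
    simp only [ContinuousLinearMap.smul_apply, ContinuousLinearMap.mul_apply, map_sub,
      neg_one_smul]
    abel
  have hcont_g : Continuous fun s : ℝ => g (-s) := by
    rw [hgdef]
    exact (exp_continuous).comp (continuous_neg.smul continuous_const)
  obtain ⟨D, hDmem, hD⟩ := isCompact_Icc.exists_isMaxOn (Set.nonempty_Icc.mpr ht)
    (hcont_g.norm.continuousOn (s := Set.Icc 0 t))
  have hD0 : 0 ≤ ‖g (-D)‖ := norm_nonneg _
  have hmeas : MeasureTheory.AEStronglyMeasurable h
      (MeasureTheory.volume.restrict (Set.uIoc 0 t)) := by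
    have h1 : Measurable (deriv x) := measurable_deriv x
    have h2 : Continuous fun s => L (x s) := L.continuous.comp hx.continuous
    have h3 : Measurable fun s => deriv x s - L (x s) := h1.sub h2.measurable
    have h4 : Continuous fun p : (Er →L[ℝ] Er) × Er => p.1 p.2 :=
      isBoundedBilinearMap_apply.continuous
    exact ((h4.measurable.comp (hcont_g.measurable.prodMk h3))).aestronglyMeasurable
  have hint : IntervalIntegrable h MeasureTheory.volume 0 t := by
    apply IntervalIntegrable.mono_fun' (g := fun _ => ‖g (-D)‖ * M)
      (intervalIntegrable_const) hmeas
    rw [Set.uIoc_of_le ht]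
    refine (MeasureTheory.ae_restrict_iff' measurableSet_Ioc).mpr (Filter.Eventually.of_forall ?_)
    intro s hs
    have hs0 : (0:ℝ) ≤ s := hs.1.le
    have heq : deriv x s - L (x s) = u s := by rw [hdyn s hs0]; abel
    have hgs : ‖g (-s)‖ ≤ ‖g (-D)‖ := hD ⟨hs0, hs.2⟩
    calc ‖h s‖ = ‖g (-s) (u s)‖ := by rw [hhdef]; simp only; rw [heq]
      _ ≤ ‖g (-s)‖ * ‖u s‖ := (g (-s)).le_opNorm _
      _ ≤ ‖g (-D)‖ * M := mul_le_mul hgs (hu s hs0) (norm_nonneg _) hD0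
  have hftc : ∫ s in (0:ℝ)..t, h s = g (-t) (x t) - g 0 (x 0) := by
    have := intervalIntegral.integral_eq_sub_of_hasDerivAt
      (f := fun τ => g (-τ) (x τ)) (f' := h) (fun s _ => hyd s) hint
    simpa using this
  have hg0 : g 0 = 1 := by
    rw [hgdef]
    show exp ((0:ℝ) • L) = 1
    rw [(zero_smul ℝ L : (0:ℝ) • L = 0)]
    exact exp_zero
  have hginv : ∀ s : ℝ, g s * g (-s) = 1 := by
    intro s
    rw [hgdef]
    simp only
    rw [← exp_add_of_commute (commute_smul_smul L s (-s))]
    have harg : s • L + (-s) • L = (0:ℝ) • L := by module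
    rw [harg, (zero_smul ℝ L : (0:ℝ) • L = 0)]
    exact exp_zero
  have hxt : x t = g t (x 0) + g t (∫ s in (0:ℝ)..t, h s) := by
    have h5 : g (-t) (x t) = x 0 + ∫ s in (0:ℝ)..t, h s := by
      rw [hftc, hg0, ContinuousLinearMap.one_apply]
      abel
    have h6 : g t (g (-t) (x t)) = x t := by
      rw [← ContinuousLinearMap.mul_apply, hginv t, ContinuousLinearMap.one_apply]
    rw [← h6, h5, map_add]
  have hpush : g t (∫ s in (0:ℝ)..t, h s) =
      ∫ s in (0:ℝ)..t, g (t - s) (deriv x s - L (x s)) := by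
    rw [← ContinuousLinearMap.intervalIntegral_comp_comm (g t) hint]
    apply intervalIntegral.integral_congr
    intro s _
    show g t (h s) = _
    have hgts : g t * g (-s) = g (t - s) := by
      rw [hgdef]
      simp only
      rw [← exp_add_of_commute (commute_smul_smul L t (-s))]
      congr 1
      module
    rw [hhdef]
    simp only
    rw [← ContinuousLinearMap.mul_apply, hgts]
  have hbound : ‖∫ s in (0:ℝ)..t, g (t - s) (deriv x s - L (x s))‖ ≤
      |∫ s in (0:ℝ)..t, C * M * Real.exp (-(ε * (t - s)))| := by
    apply intervalIntegral.norm_integral_le_abs_of_norm_le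
    · rw [Set.uIoc_of_le ht]
      refine (MeasureTheory.ae_restrict_iff' measurableSet_Ioc).mpr
        (Filter.Eventually.of_forall ?_)
      intro s hs
      have hs0 : (0:ℝ) ≤ s := hs.1.le
      have heq : deriv x s - L (x s) = u s := by rw [hdyn s hs0]; abel
      rw [heq]
      have hts : (0:ℝ) ≤ t - s := by linarith [hs.2]
      calc ‖g (t - s) (u s)‖ ≤ C * Real.exp (-(ε * (t - s))) * ‖u s‖ := hdecay (t - s) hts (u s)
        _ ≤ C * Real.exp (-(ε * (t - s))) * M := by
            apply mul_le_mul_of_nonneg_left (hu s hs0)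
            positivity
        _ = C * M * Real.exp (-(ε * (t - s))) := by ring
    · apply Continuous.intervalIntegrable
      fun_prop
  have hcalc : ∫ s in (0:ℝ)..t, C * M * Real.exp (-(ε * (t - s))) =
      C * M * ((1 - Real.exp (-(ε * t))) / ε) := by
    have hanti : ∀ s : ℝ, HasDerivAt (fun τ : ℝ => Real.exp (-(ε * (t - τ))) / ε)
        (Real.exp (-(ε * (t - s)))) s := by
      intro s
      have h1 : HasDerivAt (fun τ : ℝ => -(ε * (t - τ))) ε s := by
        have h2 := (((hasDerivAt_id s).const_sub t).const_mul ε).neg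
        refine h2.congr_deriv ?_
        ring
      have h3 := (h1.exp).div_const ε
      refine h3.congr_deriv ?_
      field_simp
    rw [intervalIntegral.integral_const_mul,
      intervalIntegral.integral_eq_sub_of_hasDerivAt (fun s _ => hanti s)
        (Continuous.intervalIntegrable (by fun_prop) _ _)]
    simp only [sub_self, mul_zero, neg_zero, sub_zero, Real.exp_zero]
    ring
  have h7 : ‖g t (∫ s in (0:ℝ)..t, h s)‖ ≤ C * M / ε := by
    rw [hpush]
    refine hbound.trans ?_
    rw [hcalc]
    have he1 : Real.exp (-(ε * t)) ≤ 1 := Real.exp_le_one_iff.mpr (by nlinarith)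
    have he0 : 0 < Real.exp (-(ε * t)) := Real.exp_pos _
    rw [abs_of_nonneg (mul_nonneg (by positivity) (div_nonneg (by linarith) hε.le))]
    calc C * M * ((1 - Real.exp (-(ε * t))) / ε) ≤ C * M * (1 / ε) := by
          apply mul_le_mul_of_nonneg_left _ (by positivity : (0:ℝ) ≤ C * M)
          gcongr
          linarith
      _ = C * M / ε := by ring
  have h8 : ‖g t (x 0)‖ ≤ C * ‖x 0‖ := by
    have h9 := hdecay t ht (x 0)
    have he1 : Real.exp (-(ε * t)) ≤ 1 := Real.exp_le_one_iff.mpr (by nlinarith)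
    have he0 : 0 < Real.exp (-(ε * t)) := Real.exp_pos _
    calc ‖g t (x 0)‖ ≤ C * Real.exp (-(ε * t)) * ‖x 0‖ := h9
      _ ≤ C * 1 * ‖x 0‖ := by
          apply mul_le_mul_of_nonneg_right _ (norm_nonneg _)
          apply mul_le_mul_of_nonneg_left he1 hC.le
      _ = C * ‖x 0‖ := by ring
  calc ‖x t‖ = ‖g t (x 0) + g t (∫ s in (0:ℝ)..t, h s)‖ := by rw [← hxt]
    _ ≤ ‖g t (x 0)‖ + ‖g t (∫ s in (0:ℝ)..t, h s)‖ := norm_add_le _ _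
    _ ≤ C * ‖x 0‖ + C * M / ε := add_le_add h8 h7

lemma real_smul_eq (r : ℝ) (w : Ec) : (r : ℂ) • w = r • w := by
  rw [← smul_one_smul ℂ r w]
  congr 1
  rw [Complex.real_smul, mul_one]

end HurwitzAux

/-- bounded-input bounded-state property of the Hurwitz reference model,
used for claim (c) of Theorem 1 and claim (d) of Theorem 3. If all complex eigenvalues of
`A` have negative real part and the input `u` is bounded on `[0, ∞)`, then any solution of
`x' = A·x + u` is bounded on `[0, ∞)`. -/
theorem bounded_state_of_hurwitz_bounded_input
    {n : ℕ} (A : Matrix (Fin n) (Fin n) ℝ)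
    (hA : ∀ μ ∈ spectrum ℂ (A.map (algebraMap ℝ ℂ)), μ.re < 0)
    (u : ℝ → EuclideanSpace ℝ (Fin n)) (M : ℝ) (hM : 0 ≤ M)
    (hu : ∀ t ≥ (0:ℝ), ‖u t‖ ≤ M)
    (x : ℝ → EuclideanSpace ℝ (Fin n)) (hx : Differentiable ℝ x)
    (hdyn : ∀ t ≥ (0:ℝ), deriv x t = (show EuclideanSpace ℝ (Fin n) from WithLp.toLp 2 (A.mulVec (x t))) + u t) :
    ∃ K ≥ (0:ℝ), ∀ t ≥ (0:ℝ), ‖x t‖ ≤ K := by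
  classical
  set L : EuclideanSpace ℝ (Fin n) →L[ℝ] EuclideanSpace ℝ (Fin n) :=
    Matrix.toEuclideanCLM (𝕜 := ℝ) A with hLdef
  set T : EuclideanSpace ℂ (Fin n) →L[ℂ] EuclideanSpace ℂ (Fin n) :=
    Matrix.toEuclideanCLM (𝕜 := ℂ) (A.map (algebraMap ℝ ℂ)) with hTdef
  have hspecT : ∀ μ ∈ spectrum ℂ T, μ.re < 0 := by
    intro μ hμ
    rw [hTdef, HurwitzAux.spectrum_toEuclideanCLM] at hμ
    exact hA μ hμ
  obtain ⟨C, hC, ε, hε, hdecayT⟩ := HurwitzAux.exp_smul_norm_decay T hspecT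
  have hcomm0 : ∀ w, HurwitzAux.cx (L w) = T (HurwitzAux.cx w) := by
    intro w
    ext i
    rw [HurwitzAux.cx_apply]
    show ((A.mulVec w) i : ℂ) = ((A.map (algebraMap ℝ ℂ)).mulVec (HurwitzAux.cx w)) i
    simp only [Matrix.mulVec, dotProduct, Matrix.map_apply]
    push_cast
    rfl
  have hdecayL : ∀ t : ℝ, 0 ≤ t → ∀ v, ‖NormedSpace.exp (t • L) v‖ ≤
      C * Real.exp (-(ε * t)) * ‖v‖ := by
    intro t ht v
    have hcommt : ∀ w, HurwitzAux.cx ((t • L) w) = ((t:ℂ) • T) (HurwitzAux.cx w) := by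
      intro w
      rw [ContinuousLinearMap.smul_apply, ContinuousLinearMap.smul_apply, map_smul, hcomm0,
        HurwitzAux.real_smul_eq]
    have h1 := HurwitzAux.cx_exp_comm (t • L) ((t:ℂ) • T) hcommt v
    calc ‖NormedSpace.exp (t • L) v‖ = ‖HurwitzAux.cx (NormedSpace.exp (t • L) v)‖ :=
          (HurwitzAux.norm_cx _).symm
      _ = ‖NormedSpace.exp ((t:ℂ) • T) (HurwitzAux.cx v)‖ := by rw [h1]
      _ ≤ ‖NormedSpace.exp ((t:ℂ) • T)‖ * ‖HurwitzAux.cx v‖ :=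
          ContinuousLinearMap.le_opNorm _ _
      _ ≤ (C * Real.exp (-(ε * t))) * ‖v‖ := by
          rw [HurwitzAux.norm_cx]
          exact mul_le_mul_of_nonneg_right (hdecayT t ht) (norm_nonneg _)
  have hdyn' : ∀ t ≥ (0:ℝ), deriv x t = L (x t) + u t := by
    intro t ht
    rw [hdyn t ht]
    rfl
  exact HurwitzAux.bounded_of_decay L C ε hC hε hdecayL u M hM hu x hx hdyn'
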